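/- Let A ⊂ B(X) be a strongly closed unital algebra with complemented invariant subspace lattice. If Q ∈ A' satisfies Q² = 0, then Q commutes with every operator in algLat A, i.e., Q ∈ (algLat A)'. -/

import Mathlib

open Filter Topology

/-- If `A` is a strongly closed unital algebra with complemented invariant
subspace lattice and `Q ∈ A'` satisfies `Q² = 0`, then `Q` commutes with every operator in
`algLat A`. -/
theorem stmt7 {X : Type*} [NormedAddCommGroup X] [NormedSpace ℂ X] [CompleteSpace X]
    (A : Subalgebra ℂ (X →L[ℂ] X))
    (hA : IsClosed ((fun a : X →L[ℂ] X => (a : X → X)) '' (A : Set (X →L[ℂ] X))))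
    (hCISL : ∀ K : Submodule ℂ X, IsClosed (K : Set X) → (∀ a ∈ A, ∀ x ∈ K, a x ∈ K) →
      ∃ Kc : Submodule ℂ X, IsClosed (Kc : Set X) ∧ (∀ a ∈ A, ∀ x ∈ Kc, a x ∈ Kc) ∧
        IsCompl K Kc)
    (Q : X →L[ℂ] X) (hQA : ∀ a ∈ A, Q * a = a * Q) (hQ2 : Q * Q = 0)
    (b : X →L[ℂ] X)
    (hb : ∀ K : Submodule ℂ X, IsClosed (K : Set X) → (∀ a ∈ A, ∀ x ∈ K, a x ∈ K) →
      ∀ x ∈ K, b x ∈ K) :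
    Q * b = b * Q := by
  -- pointwise versions of the hypotheses
  have hQ2' : ∀ x : X, Q (Q x) = 0 := by
    intro x
    have := ContinuousLinearMap.ext_iff.mp hQ2 x
    simpa [ContinuousLinearMap.mul_apply] using this
  have hQA' : ∀ a ∈ A, ∀ x : X, Q (a x) = a (Q x) := by
    intro a ha x
    have := ContinuousLinearMap.ext_iff.mp (hQA a ha) x
    simpa [ContinuousLinearMap.mul_apply] using this
  -- K = ker Q
  set K : Submodule ℂ X := LinearMap.ker (Q : X →ₗ[ℂ] X) with hKdef
  have hKmem : ∀ x : X, x ∈ K ↔ Q x = 0 := by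
    intro x; simp [hKdef, LinearMap.mem_ker]
  have hKclosed : IsClosed (K : Set X) := ContinuousLinearMap.isClosed_ker Q
  have hKinv : ∀ a ∈ A, ∀ x ∈ K, a x ∈ K := by
    intro a ha x hx
    rw [hKmem] at hx ⊢
    rw [hQA' a ha, hx, map_zero]
  obtain ⟨Kc, hKcClosed, hKcInv, hCompl⟩ := hCISL K hKclosed hKinv
  -- S = (1 - Q)⁻¹ Kc  (equivalently (1 + Q) Kc, the "graph" subspace)
  set S : Submodule ℂ X := Kc.comap ((1 - Q : X →L[ℂ] X) : X →ₗ[ℂ] X) with hSdef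
  have hSmem : ∀ x : X, x ∈ S ↔ x - Q x ∈ Kc := by
    intro x
    simp [hSdef, Submodule.mem_comap, ContinuousLinearMap.sub_apply,
      ContinuousLinearMap.one_apply]
  have hSclosed : IsClosed (S : Set X) := by
    have h1 : (S : Set X) = (⇑(1 - Q : X →L[ℂ] X)) ⁻¹' (Kc : Set X) := rfl
    rw [h1]
    exact hKcClosed.preimage (1 - Q : X →L[ℂ] X).continuous
  have hSinv : ∀ a ∈ A, ∀ x ∈ S, a x ∈ S := by
    intro a ha x hx
    rw [hSmem] at hx ⊢
    have : a x - Q (a x) = a (x - Q x) := by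
      rw [hQA' a ha, map_sub]
    rw [this]
    exact hKcInv a ha _ hx
  -- the key pointwise commutation on Kc
  have key : ∀ w ∈ Kc, Q (b w) = b (Q w) := by
    intro w hw
    have hwS : w + Q w ∈ S := by
      rw [hSmem]
      have : w + Q w - Q (w + Q w) = w := by
        rw [map_add, hQ2' w, add_zero]; abel
      rw [this]; exact hw
    have hbS : b (w + Q w) ∈ S := hb S hSclosed hSinv _ hwS
    rw [hSmem] at hbS
    have hbw : b w ∈ Kc := hb Kc hKcClosed hKcInv w hw
    have hQwK : Q w ∈ K := by rw [hKmem]; exact hQ2' w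
    have hbQw : b (Q w) ∈ K := hb K hKclosed hKinv _ hQwK
    have hbQw0 : Q (b (Q w)) = 0 := (hKmem _).mp hbQw
    -- d := b w - (b(w+Qw) - Q b(w+Qw)) lies in K ∩ Kc, hence is 0
    set u : X := b (w + Q w) with hu
    have hdKc : b w - (u - Q u) ∈ Kc := Kc.sub_mem hbw hbS
    have huval : u = b w + b (Q w) := by rw [hu, map_add]
    have hdK : b w - (u - Q u) ∈ K := by
      rw [hKmem, map_sub, map_sub, hQ2' u, sub_zero, huval, map_add, hbQw0,
        add_zero, sub_self]
    have hd0 : b w - (u - Q u) = 0 :=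
      Submodule.disjoint_def.mp hCompl.disjoint _ hdK hdKc
    have hbweq : b w = u - Q u := by
      have := sub_eq_zero.mp hd0; exact this
    have h1 : Q (b w) = Q u := by rw [hbweq, map_sub, hQ2', sub_zero]
    have h2 : b (Q w) = Q u := by
      have h3 : b (Q w) = u - b w := by rw [huval]; abel
      rw [h3, hbweq]; abel
    rw [h1, h2]
  -- conclude
  ext x
  have hx : x ∈ K ⊔ Kc := by rw [hCompl.sup_eq_top]; trivial
  obtain ⟨k, hk, w, hw, rfl⟩ := Submodule.mem_sup.mp hx
  have hQk : Q k = 0 := (hKmem _).mp hk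
  have hbk : b k ∈ K := hb K hKclosed hKinv k hk
  have hQbk : Q (b k) = 0 := (hKmem _).mp hbk
  simp only [ContinuousLinearMap.mul_apply, map_add, hQk, hQbk, key w hw, zero_add, map_zero]
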